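/- For every integer n ≥ 1 and every ρ > 0, the restriction of U_n^ρ to the space Π_n of polynomials of degree at most n is a linear bijection of Π_n onto itself; consequently, for every continuous f : [0,1] → ℝ there exists a unique polynomial p ∈ Π_n such that F_{n,k}^ρ(p) = F_{n,k}^ρ(f) for all k = 0,1,…,n. -/

import Mathlib

open MeasureTheory

/-- Euler Beta function `B(a,b) = ∫₀¹ t^(a-1) (1-t)^(b-1) dt`. -/
noncomputable def betaFn (a b : ℝ) : ℝ :=
  ∫ t in (0:ℝ)..1, t ^ (a - 1) * (1 - t) ^ (b - 1)

/-- The functionals `F_{n,k}^ρ`. -/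
noncomputable def Ffun (n k : ℕ) (ρ : ℝ) (f : ℝ → ℝ) : ℝ :=
  if k = 0 then f 0
  else if k = n then f 1
  else (betaFn ((k : ℝ) * ρ) (((n : ℝ) - (k : ℝ)) * ρ))⁻¹ *
    ∫ t in (0:ℝ)..1, t ^ ((k : ℝ) * ρ - 1) * (1 - t) ^ (((n : ℝ) - (k : ℝ)) * ρ - 1) * f t

/-- Bernstein basis polynomial `p_{n,k}(x)`. -/
noncomputable def bern (n k : ℕ) (x : ℝ) : ℝ :=
  (n.choose k : ℝ) * x ^ k * (1 - x) ^ (n - k)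

/-- The operator `U_n^ρ`. -/
noncomputable def Uop (n : ℕ) (ρ : ℝ) (f : ℝ → ℝ) (x : ℝ) : ℝ :=
  ∑ k ∈ Finset.range (n + 1), Ffun n k ρ f * bern n k x

/-- Bernstein basis polynomial as an element of `ℝ[X]`. -/
noncomputable def bernPoly (n k : ℕ) : Polynomial ℝ :=
  (n.choose k : ℝ) • (Polynomial.X ^ k * (1 - Polynomial.X) ^ (n - k))

/-- The operator `U_n^ρ`, with values in `ℝ[X]`. -/
noncomputable def Upoly (n : ℕ) (ρ : ℝ) (f : ℝ → ℝ) : Polynomial ℝ :=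
  ∑ k ∈ Finset.range (n + 1), Ffun n k ρ f • bernPoly n k

/-! ### Auxiliary facts about the Beta function -/

section BetaFacts

lemma betaFn_complex {a b : ℝ} (_ha : 0 < a) (_hb : 0 < b) :
    ((betaFn a b : ℝ) : ℂ) = Complex.betaIntegral a b := by
  rw [betaFn, ← intervalIntegral.integral_ofReal, Complex.betaIntegral]
  refine intervalIntegral.integral_congr fun t ht => ?_
  rw [Set.uIcc_of_le (by norm_num : (0:ℝ) ≤ 1)] at ht
  push_cast
  rw [Complex.ofReal_cpow ht.1 (a - 1),
    Complex.ofReal_cpow (by linarith [ht.2] : (0:ℝ) ≤ 1 - t) (b - 1)]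
  push_cast
  ring

lemma betaFn_eq_Gamma {a b : ℝ} (ha : 0 < a) (hb : 0 < b) :
    betaFn a b = Real.Gamma a * Real.Gamma b / Real.Gamma (a + b) := by
  have h := Complex.Gamma_mul_Gamma_eq_betaIntegral
    (s := (a:ℂ)) (t := (b:ℂ)) (by simpa using ha) (by simpa using hb)
  rw [← betaFn_complex ha hb] at h
  have hab : (0:ℝ) < a + b := by linarith
  have h2 : ((Real.Gamma a * Real.Gamma b : ℝ) : ℂ)
      = ((Real.Gamma (a + b) * betaFn a b : ℝ) : ℂ) := by
    push_cast
    rw [← Complex.Gamma_ofReal, ← Complex.Gamma_ofReal, ← Complex.Gamma_ofReal] at *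
    simpa using h
  have h3 := Complex.ofReal_injective h2
  field_simp [(Real.Gamma_pos_of_pos hab).ne']
  linarith [h3]

lemma betaFn_pos {a b : ℝ} (ha : 0 < a) (hb : 0 < b) : 0 < betaFn a b := by
  rw [betaFn_eq_Gamma ha hb]
  have := Real.Gamma_pos_of_pos ha
  have := Real.Gamma_pos_of_pos hb
  have := Real.Gamma_pos_of_pos (by linarith : (0:ℝ) < a + b)
  positivity

lemma Gamma_add_nat' {a : ℝ} (ha : 0 < a) (j : ℕ) :
    Real.Gamma (a + j) = (∏ i ∈ Finset.range j, (a + i)) * Real.Gamma a := by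
  induction j with
  | zero => simp
  | succ j ih =>
    have e : a + (j + 1 : ℕ) = (a + j) + 1 := by push_cast; ring
    rw [e, Real.Gamma_add_one (by positivity), ih, Finset.prod_range_succ]
    ring

lemma betaFn_add_nat {a b : ℝ} (ha : 0 < a) (hb : 0 < b) (j : ℕ) :
    betaFn (a + j) b = (∏ i ∈ Finset.range j, ((a + i) / (a + b + i))) * betaFn a b := by
  have haj : (0:ℝ) < a + j := by positivity
  have hab : (0:ℝ) < a + b := by linarith
  rw [betaFn_eq_Gamma haj hb, betaFn_eq_Gamma ha hb]
  have e : a + (j:ℝ) + b = (a + b) + j := by ring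
  rw [Gamma_add_nat' ha j, e, Gamma_add_nat' hab j, Finset.prod_div_distrib]
  have h1 := (Real.Gamma_pos_of_pos ha).ne'
  have h2 := (Real.Gamma_pos_of_pos hb).ne'
  have h3 := (Real.Gamma_pos_of_pos hab).ne'
  have h4 : (∏ i ∈ Finset.range j, (a + b + (i:ℝ))) ≠ 0 :=
    Finset.prod_ne_zero_iff.mpr fun i _ => by positivity
  field_simp

lemma weight_integrable_half {c d : ℝ} (hc : 0 < c) (_hd : 0 < d) {g : ℝ → ℝ}
    (hg : Continuous g) :
    IntervalIntegrable (fun t => t ^ (c - 1) * ((1 - t) ^ (d - 1) * g t)) volume 0 (1/2 : ℝ) := by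
  have h1 : IntervalIntegrable (fun t : ℝ => t ^ (c - 1)) volume 0 (1/2 : ℝ) :=
    intervalIntegral.intervalIntegrable_rpow' (by linarith)
  refine h1.mul_continuousOn ?_
  rw [Set.uIcc_of_le (by norm_num : (0:ℝ) ≤ 1/2)]
  refine ContinuousOn.mul ?_ hg.continuousOn
  refine ContinuousOn.rpow_const ((continuous_const.sub continuous_id).continuousOn) ?_
  intro x hx
  have : x ≤ 1/2 := hx.2
  left
  intro h0
  have : (1:ℝ) - x = 0 := h0
  linarith

lemma weight_integrable {a b : ℝ} (ha : 0 < a) (hb : 0 < b) {g : ℝ → ℝ} (hg : Continuous g) :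
    IntervalIntegrable (fun t => t ^ (a - 1) * (1 - t) ^ (b - 1) * g t) volume 0 1 := by
  have I1 : IntervalIntegrable (fun t => t ^ (a - 1) * (1 - t) ^ (b - 1) * g t)
      volume 0 (1/2 : ℝ) := by
    have := weight_integrable_half ha hb hg
    simpa [mul_assoc] using this
  have I2 : IntervalIntegrable (fun t => t ^ (a - 1) * (1 - t) ^ (b - 1) * g t)
      volume (1/2 : ℝ) 1 := by
    have h2 := (weight_integrable_half hb ha (g := fun t => g (1 - t))
      (hg.comp ((continuous_const (y := (1:ℝ))).sub continuous_id))).comp_sub_left 1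
    norm_num at h2
    have e : (fun t : ℝ => t ^ (a - 1) * (1 - t) ^ (b - 1) * g t)
        = fun t : ℝ => (1 - t) ^ (b - 1) * (t ^ (a - 1) * g t) := by
      funext t; ring
    rw [e]
    exact h2.symm
  exact I1.trans I2

lemma moment_integral {a b : ℝ} (ha : 0 < a) (_hb : 0 < b) (j : ℕ) :
    (∫ t in (0:ℝ)..1, t ^ (a - 1) * (1 - t) ^ (b - 1) * t ^ j) = betaFn (a + j) b := by
  rw [betaFn]
  refine intervalIntegral.integral_congr fun t ht => ?_
  rw [Set.uIcc_of_le (by norm_num : (0:ℝ) ≤ 1)] at ht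
  rcases eq_or_lt_of_le ht.1 with h0 | h0
  · rcases Nat.eq_zero_or_pos j with hj | hj
    · subst hj; simp
    · rw [← h0]
      rw [zero_pow hj.ne', mul_zero, Real.zero_rpow (by
        have : (1:ℝ) ≤ (j:ℝ) := by exact_mod_cast hj
        intro h; linarith : a + (j:ℝ) - 1 ≠ 0)]
      rw [zero_mul]
  · rw [← Real.rpow_natCast t j, mul_comm (t ^ (a-1) * (1-t)^(b-1)) _, ← mul_assoc,
      ← Real.rpow_add h0]
    ring_nf

end BetaFacts

/-! ### Moments of the functionals -/

/-- The moment `F_{n,k}^ρ(x^j)`. -/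
noncomputable def mom (n k j : ℕ) (ρ : ℝ) : ℝ :=
  ∏ i ∈ Finset.range j, (((k : ℝ) * ρ + i) / ((n : ℝ) * ρ + i))

section Moments
variable {n k : ℕ} {ρ : ℝ}

lemma middle_pos (hρ : 0 < ρ) (hk0 : k ≠ 0) (hkn : k ≠ n) (hk : k ≤ n) :
    0 < (k : ℝ) * ρ ∧ 0 < ((n : ℝ) - (k : ℝ)) * ρ := by
  constructor
  · have : (0:ℝ) < k := by exact_mod_cast Nat.pos_of_ne_zero hk0
    positivity
  · have h1 : k < n := lt_of_le_of_ne hk hkn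
    have : (k:ℝ) < n := by exact_mod_cast h1
    have : (0:ℝ) < (n:ℝ) - k := by linarith
    positivity

lemma Ffun_monomial (hn : 1 ≤ n) (hρ : 0 < ρ) (hk : k ≤ n) (j : ℕ) :
    Ffun n k ρ (fun x => x ^ j) = mom n k j ρ := by
  by_cases hk0 : k = 0
  · subst hk0
    rcases Nat.eq_zero_or_pos j with hj | hj
    · simp [Ffun, mom, hj]
    · rw [Ffun, if_pos rfl, mom]
      rw [Finset.prod_eq_zero (Finset.mem_range.mpr hj) (by simp)]
      simp [hj.ne']
  by_cases hkn : k = n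
  · rw [Ffun, if_neg hk0, if_pos hkn, mom]
    subst hkn
    rw [Finset.prod_eq_one fun i _ => ?_]
    · simp
    · have : (0:ℝ) < (k:ℝ) * ρ + i := by
        have : (0:ℝ) < k := by exact_mod_cast Nat.pos_of_ne_zero hk0
        positivity
      field_simp
  · obtain ⟨ha, hb⟩ := middle_pos hρ hk0 hkn hk
    rw [Ffun, if_neg hk0, if_neg hkn, moment_integral ha hb j, betaFn_add_nat ha hb j]
    have hβ := (betaFn_pos ha hb).ne'
    have hab : (k:ℝ) * ρ + ((n:ℝ) - (k:ℝ)) * ρ = (n:ℝ) * ρ := by ring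
    rw [hab, mom]
    field_simp
    have hβ' : betaFn ((k:ℝ) * ρ) (ρ * ((n:ℝ) - (k:ℝ))) ≠ 0 := by rwa [mul_comm ρ]
    exact div_self hβ'

lemma Ffun_sum (hn : 1 ≤ n) (hρ : 0 < ρ) (hk : k ≤ n) (s : Finset ℕ) (c : ℕ → ℝ) :
    Ffun n k ρ (fun x => ∑ j ∈ s, c j * x ^ j) = ∑ j ∈ s, c j * mom n k j ρ := by
  by_cases hk0 : k = 0
  · subst hk0
    rw [Ffun, if_pos rfl]
    refine Finset.sum_congr rfl fun j hj => ?_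
    have h := Ffun_monomial hn hρ (Nat.zero_le n) j
    rw [Ffun, if_pos rfl] at h
    rw [← h]
  by_cases hkn : k = n
  · rw [Ffun, if_neg hk0, if_pos hkn]
    refine Finset.sum_congr rfl fun j hj => ?_
    have h := Ffun_monomial hn hρ hk j
    rw [Ffun, if_neg hk0, if_pos hkn] at h
    rw [← h]
  · obtain ⟨ha, hb⟩ := middle_pos hρ hk0 hkn hk
    rw [Ffun, if_neg hk0, if_neg hkn]
    have e1 : (fun t : ℝ => t ^ ((k:ℝ) * ρ - 1) * (1 - t) ^ (((n:ℝ) - (k:ℝ)) * ρ - 1) *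
        (∑ j ∈ s, c j * t ^ j))
        = fun t : ℝ => ∑ j ∈ s, c j *
          (t ^ ((k:ℝ) * ρ - 1) * (1 - t) ^ (((n:ℝ) - (k:ℝ)) * ρ - 1) * t ^ j) := by
      funext t
      rw [Finset.mul_sum]
      exact Finset.sum_congr rfl fun j _ => by ring
    rw [e1, intervalIntegral.integral_finset_sum (μ := volume) (a := (0:ℝ)) (b := (1:ℝ))
      (f := fun j (t:ℝ) => c j *
        (t ^ ((k:ℝ) * ρ - 1) * (1 - t) ^ (((n:ℝ) - (k:ℝ)) * ρ - 1) * t ^ j))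
      fun j _ =>
      (weight_integrable ha hb (by continuity : Continuous fun t : ℝ => t ^ j)).const_mul (c j)]
    rw [Finset.mul_sum]
    refine Finset.sum_congr rfl fun j hj => ?_
    rw [intervalIntegral.integral_const_mul, moment_integral ha hb j]
    have h := Ffun_monomial hn hρ hk j
    rw [Ffun, if_neg hk0, if_neg hkn, moment_integral ha hb j] at h
    rw [← h]
    ring

lemma Ffun_poly (hn : 1 ≤ n) (hρ : 0 < ρ) (hk : k ≤ n) {p : Polynomial ℝ}
    (hp : p.natDegree ≤ n) :
    Ffun n k ρ (fun x => p.eval x) = ∑ j ∈ Finset.range (n+1), p.coeff j * mom n k j ρ := by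
  have e : (fun x : ℝ => p.eval x)
      = fun x : ℝ => ∑ j ∈ Finset.range (n+1), p.coeff j * x ^ j := by
    funext x
    exact Polynomial.eval_eq_sum_range' (Nat.lt_succ_of_le hp) x
  rw [e, Ffun_sum hn hρ hk]

end Moments
open Polynomial

noncomputable def rpoly (n : ℕ) (ρ : ℝ) (j : ℕ) : Polynomial ℝ :=
  C ((∏ i ∈ Finset.range j, ((n:ℝ) * ρ + i))⁻¹) *
    ∏ i ∈ Finset.range j, (C ρ * X + C (i:ℝ))

section rp
variable {n : ℕ} {ρ : ℝ}

lemma den_pos (hn : 1 ≤ n) (hρ : 0 < ρ) (i : ℕ) : (0:ℝ) < (n:ℝ) * ρ + i := by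
  have h1 : (1:ℝ) ≤ (n:ℝ) := by exact_mod_cast hn
  have h2 : (0:ℝ) ≤ (i:ℝ) := Nat.cast_nonneg i
  nlinarith

lemma den_prod_ne (hn : 1 ≤ n) (hρ : 0 < ρ) (j : ℕ) :
    (∏ i ∈ Finset.range j, ((n:ℝ) * ρ + i)) ≠ 0 :=
  Finset.prod_ne_zero_iff.mpr fun i _ => (den_pos hn hρ i).ne'

lemma rpoly_eval (j k : ℕ) : (rpoly n ρ j).eval (k:ℝ) = mom n k j ρ := by
  rw [rpoly, mom, eval_mul, eval_C, eval_prod]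
  rw [Finset.prod_div_distrib]
  rw [div_eq_mul_inv, mul_comm]
  congr 1
  refine Finset.prod_congr rfl fun i _ => ?_
  rw [eval_add, eval_mul, eval_C, eval_C, eval_X, mul_comm]

lemma prod_lin_natDegree (hρ : 0 < ρ) (j : ℕ) :
    (∏ i ∈ Finset.range j, (C ρ * X + C (i:ℝ))).natDegree = j := by
  rw [natDegree_prod _ _ fun i _ => ?_]
  · calc ∑ i ∈ Finset.range j, (C ρ * X + C (i:ℝ)).natDegree
        = ∑ _i ∈ Finset.range j, 1 := Finset.sum_congr rfl fun i _ => natDegree_linear hρ.ne'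
      _ = j := by simp
  · intro h
    have h2 := natDegree_linear (b := (i:ℝ)) hρ.ne'
    rw [h] at h2
    simp at h2

lemma rpoly_natDegree (hn : 1 ≤ n) (hρ : 0 < ρ) (j : ℕ) : (rpoly n ρ j).natDegree = j := by
  rw [rpoly, natDegree_C_mul (inv_ne_zero (den_prod_ne hn hρ j)), prod_lin_natDegree hρ j]

lemma rpoly_coeff_self (hρ : 0 < ρ) (j : ℕ) : (rpoly n ρ j).coeff j
    = (∏ i ∈ Finset.range j, ((n:ℝ) * ρ + i))⁻¹ * ρ ^ j := by
  rw [rpoly, coeff_C_mul]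
  congr 1
  have hl := leadingCoeff_prod (f := fun i => C ρ * X + C (i:ℝ)) (s := Finset.range j)
  rw [leadingCoeff, prod_lin_natDegree hρ j] at hl
  rw [hl]
  calc ∏ i ∈ Finset.range j, (C ρ * X + C (i:ℝ)).leadingCoeff
      = ∏ _i ∈ Finset.range j, ρ := Finset.prod_congr rfl fun i _ => leadingCoeff_linear hρ.ne'
    _ = ρ ^ j := by simp

lemma rpoly_coeff_ne (hn : 1 ≤ n) (hρ : 0 < ρ) (j : ℕ) : (rpoly n ρ j).coeff j ≠ 0 := by
  rw [rpoly_coeff_self hρ]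
  exact mul_ne_zero (inv_ne_zero (den_prod_ne hn hρ j)) (pow_ne_zero j hρ.ne')

lemma rpoly_indep (hn : 1 ≤ n) (hρ : 0 < ρ) : ∀ d, ∀ c : ℕ → ℝ,
    (∑ j ∈ Finset.range d, C (c j) * rpoly n ρ j) = 0 → ∀ j < d, c j = 0 := by
  intro d
  induction d with
  | zero => intro c _ j hj; omega
  | succ d ih =>
    intro c h
    have hcd : c d = 0 := by
      have h0 : (∑ j ∈ Finset.range (d+1), C (c j) * rpoly n ρ j).coeff d = 0 := by
        rw [h]; simp
      rw [finset_sum_coeff] at h0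
      rw [Finset.sum_eq_single d (fun j hj hne => ?_) (by simp)] at h0
      · rw [coeff_C_mul] at h0
        exact (mul_eq_zero.mp h0).resolve_right (rpoly_coeff_ne hn hρ d)
      · have hjd : j < d := by
          have := Finset.mem_range.mp hj
          omega
        apply coeff_eq_zero_of_natDegree_lt
        calc (C (c j) * rpoly n ρ j).natDegree ≤ (rpoly n ρ j).natDegree :=
              natDegree_C_mul_le _ _
          _ = j := rpoly_natDegree hn hρ j
          _ < d := hjd
    have h' : (∑ j ∈ Finset.range d, C (c j) * rpoly n ρ j) = 0 := by
      rw [Finset.sum_range_succ, hcd] at h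
      simpa using h
    intro j hj
    rcases Nat.lt_succ_iff_lt_or_eq.mp hj with h1 | h1
    · exact ih c h' j h1
    · rw [h1]; exact hcd

end rp
lemma bernPoly_coeff_lt {n k m : ℕ} (h : m < k) : (bernPoly n k).coeff m = 0 := by
  rw [bernPoly, coeff_smul, X_pow_mul, coeff_mul_X_pow', if_neg (by omega)]
  simp

lemma bernPoly_coeff_self {n k : ℕ} : (bernPoly n k).coeff k = (n.choose k : ℝ) := by
  rw [bernPoly, coeff_smul, X_pow_mul, coeff_mul_X_pow', if_pos le_rfl, Nat.sub_self,
    coeff_zero_eq_eval_zero]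
  simp

lemma bernPoly_natDegree_le {n k : ℕ} (hk : k ≤ n) : (bernPoly n k).natDegree ≤ n := by
  rw [bernPoly]
  refine le_trans (natDegree_smul_le _ _) (le_trans (natDegree_mul_le) ?_)
  have h1 : (X ^ k : ℝ[X]).natDegree = k := natDegree_X_pow k
  have h2 : ((1 - X : ℝ[X]) ^ (n - k)).natDegree ≤ n - k := by
    refine le_trans (natDegree_pow_le) ?_
    have : (1 - X : ℝ[X]).natDegree ≤ 1 :=
      le_trans (natDegree_sub_le _ _) (by simp)
    nlinarith [this]
  omega

lemma bern_indep {n : ℕ} (a : ℕ → ℝ)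
    (h : (∑ k ∈ Finset.range (n+1), a k • bernPoly n k) = 0) :
    ∀ k ≤ n, a k = 0 := by
  intro k hk
  induction k using Nat.strong_induction_on with
  | _ k ih =>
    have h0 : (∑ l ∈ Finset.range (n+1), a l • bernPoly n l).coeff k = 0 := by rw [h]; simp
    rw [finset_sum_coeff] at h0
    rw [Finset.sum_eq_single k (fun l hl hne => ?_) (by intro hc; exact absurd (Finset.mem_range.mpr (by omega)) hc)] at h0
    · rw [coeff_smul, bernPoly_coeff_self, smul_eq_mul] at h0
      have : (n.choose k : ℝ) ≠ 0 := by
        have := Nat.choose_pos hk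
        positivity
      exact (mul_eq_zero.mp h0).resolve_right this
    · rcases lt_or_gt_of_ne hne with hlt | hgt
      · rw [ih l hlt (by omega), zero_smul, coeff_zero]
      · rw [coeff_smul, bernPoly_coeff_lt hgt, smul_zero]

/-! ### Key injectivity lemma -/

lemma F_vanish {n : ℕ} (hn : 1 ≤ n) {ρ : ℝ} (hρ : 0 < ρ) {p : Polynomial ℝ}
    (hp : p.natDegree ≤ n) (h : ∀ k ≤ n, Ffun n k ρ (fun x => p.eval x) = 0) : p = 0 := by
  set q : Polynomial ℝ := ∑ j ∈ Finset.range (n+1), C (p.coeff j) * rpoly n ρ j with hq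
  have hqdeg : q.natDegree ≤ n := by
    refine natDegree_sum_le_of_forall_le _ _ fun j hj => ?_
    refine le_trans (natDegree_C_mul_le _ _) ?_
    rw [rpoly_natDegree hn hρ]
    exact Nat.lt_succ_iff.mp (Finset.mem_range.mp hj)
  have hqeval : ∀ k : ℕ, k ≤ n → q.eval (k:ℝ) = 0 := by
    intro k hk
    rw [hq, eval_finset_sum]
    have e : ∀ j ∈ Finset.range (n+1),
        (C (p.coeff j) * rpoly n ρ j).eval (k:ℝ) = p.coeff j * mom n k j ρ := fun j _ => by
      rw [eval_mul, eval_C, rpoly_eval]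
    rw [Finset.sum_congr rfl e, ← Ffun_poly hn hρ hk hp]
    exact h k hk
  have hq0 : q = 0 := by
    refine eq_zero_of_natDegree_lt_card_of_eval_eq_zero' q
      ((Finset.range (n+1)).image (fun k : ℕ => (k:ℝ))) (fun x hx => ?_) ?_
    · obtain ⟨k, hk, rfl⟩ := Finset.mem_image.mp hx
      exact hqeval k (Nat.lt_succ_iff.mp (Finset.mem_range.mp hk))
    · rw [Finset.card_image_of_injective _ Nat.cast_injective, Finset.card_range]
      omega
  have hc := rpoly_indep hn hρ (n+1) (fun j => p.coeff j) (by rw [← hq]; exact hq0)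
  ext m
  rcases le_or_gt m n with hm | hm
  · simpa using hc m (by omega)
  · simp [Polynomial.coeff_eq_zero_of_natDegree_lt (lt_of_le_of_lt hp hm)]

/-! ### Degree facts for `Upoly` -/

lemma Upoly_natDegree_le (n : ℕ) (ρ : ℝ) (f : ℝ → ℝ) : (Upoly n ρ f).natDegree ≤ n := by
  refine natDegree_sum_le_of_forall_le _ _ fun k hk => ?_
  exact le_trans (natDegree_smul_le _ _)
    (bernPoly_natDegree_le (Nat.lt_succ_iff.mp (Finset.mem_range.mp hk)))

lemma mem_degreeLT_iff {n : ℕ} {p : Polynomial ℝ} :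
    p ∈ degreeLT ℝ (n+1) ↔ p.natDegree ≤ n := by
  rw [Polynomial.mem_degreeLT]
  by_cases hp : p = 0
  · subst hp
    simp
  · rw [Polynomial.degree_eq_natDegree hp, Nat.cast_lt]
    exact Nat.lt_succ_iff

lemma Ffun_poly_eq_of_Upoly_eq {n : ℕ} {ρ : ℝ} {f g : ℝ → ℝ}
    (h : Upoly n ρ f = Upoly n ρ g) : ∀ k ≤ n, Ffun n k ρ f = Ffun n k ρ g := by
  have h0 : (∑ k ∈ Finset.range (n+1),
      (Ffun n k ρ f - Ffun n k ρ g) • bernPoly n k) = 0 := by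
    simp only [sub_smul, Finset.sum_sub_distrib]
    rw [← Upoly, ← Upoly, h, sub_self]
  intro k hk
  have := bern_indep _ h0 k hk
  linarith [this]

lemma Ffun_poly_sub {n k : ℕ} (hn : 1 ≤ n) {ρ : ℝ} (hρ : 0 < ρ) (hk : k ≤ n)
    {p q : Polynomial ℝ} (hp : p.natDegree ≤ n) (hq : q.natDegree ≤ n) :
    Ffun n k ρ (fun x => (p - q).eval x)
      = Ffun n k ρ (fun x => p.eval x) - Ffun n k ρ (fun x => q.eval x) := by
  have hpq : (p - q).natDegree ≤ n :=
    le_trans (natDegree_sub_le _ _) (max_le hp hq)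
  rw [Ffun_poly hn hρ hk hpq, Ffun_poly hn hρ hk hp, Ffun_poly hn hρ hk hq,
    ← Finset.sum_sub_distrib]
  exact Finset.sum_congr rfl fun j _ => by rw [Polynomial.coeff_sub]; ring

/-! ### The linear endomorphism of `Π_n` -/

noncomputable def Ulin (n : ℕ) (ρ : ℝ) (hn : 1 ≤ n) (hρ : 0 < ρ) :
    degreeLT ℝ (n+1) →ₗ[ℝ] degreeLT ℝ (n+1) where
  toFun p := ⟨Upoly n ρ (fun x => (p : Polynomial ℝ).eval x),
    mem_degreeLT_iff.mpr (Upoly_natDegree_le n ρ _)⟩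
  map_add' p q := by
    ext1
    simp only [Submodule.coe_add]
    rw [Upoly, Upoly, Upoly, ← Finset.sum_add_distrib]
    refine Finset.sum_congr rfl fun k hk => ?_
    have hk' : k ≤ n := Nat.lt_succ_iff.mp (Finset.mem_range.mp hk)
    have hp := mem_degreeLT_iff.mp p.2
    have hq := mem_degreeLT_iff.mp q.2
    have hpq : ((p : Polynomial ℝ) + q).natDegree ≤ n :=
      le_trans (natDegree_add_le _ _) (max_le hp hq)
    rw [← add_smul]
    congr 1
    rw [Ffun_poly hn hρ hk' hpq, Ffun_poly hn hρ hk' hp, Ffun_poly hn hρ hk' hq,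
      ← Finset.sum_add_distrib]
    exact Finset.sum_congr rfl fun j _ => by rw [Polynomial.coeff_add]; ring
  map_smul' c p := by
    ext1
    simp only [Submodule.coe_smul, RingHom.id_apply]
    rw [Upoly, Upoly, Finset.smul_sum]
    refine Finset.sum_congr rfl fun k hk => ?_
    have hk' : k ≤ n := Nat.lt_succ_iff.mp (Finset.mem_range.mp hk)
    have hp := mem_degreeLT_iff.mp p.2
    have hcp : (c • (p : Polynomial ℝ)).natDegree ≤ n :=
      le_trans (natDegree_smul_le _ _) hp
    rw [smul_smul]
    congr 1
    rw [Ffun_poly hn hρ hk' hcp, Ffun_poly hn hρ hk' hp, Finset.mul_sum]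
    exact Finset.sum_congr rfl fun j _ => by
      rw [Polynomial.coeff_smul, smul_eq_mul]; ring

lemma Ulin_injective (n : ℕ) (ρ : ℝ) (hn : 1 ≤ n) (hρ : 0 < ρ) :
    Function.Injective (Ulin n ρ hn hρ) := by
  rw [injective_iff_map_eq_zero]
  intro p hp
  have h0 : Upoly n ρ (fun x => (p : Polynomial ℝ).eval x) = 0 := by
    have := congrArg Subtype.val hp
    simpa [Ulin] using this
  have hF := bern_indep (fun k => Ffun n k ρ (fun x => (p : Polynomial ℝ).eval x))
    (by rw [← Upoly]; exact h0)
  have hz : (p : Polynomial ℝ) = 0 :=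
    F_vanish hn hρ (mem_degreeLT_iff.mp p.2) hF
  exact Subtype.ext hz

lemma Ulin_surjective (n : ℕ) (ρ : ℝ) (hn : 1 ≤ n) (hρ : 0 < ρ) :
    Function.Surjective (Ulin n ρ hn hρ) := by
  haveI : Module.Finite ℝ (degreeLT ℝ (n+1)) :=
    Module.Finite.equiv (Polynomial.degreeLTEquiv ℝ (n+1)).symm
  exact (LinearMap.injective_iff_surjective).mp (Ulin_injective n ρ hn hρ)

/-- For `n ≥ 1` and `ρ > 0`, the restriction of `U_n^ρ` to `Π_n` is a bijection of
`Π_n` onto itself; consequently, for every continuous `f : [0,1] → ℝ` there is a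
unique polynomial `p ∈ Π_n` with `F_{n,k}^ρ(p) = F_{n,k}^ρ(f)` for all `k = 0,…,n`. -/
theorem Upoly_bijOn_and_existsUnique_interpolant (n : ℕ) (hn : 1 ≤ n) (ρ : ℝ) (hρ : 0 < ρ) :
    Set.BijOn (fun p : Polynomial ℝ => Upoly n ρ (fun x => p.eval x))
      {p : Polynomial ℝ | p.natDegree ≤ n} {p : Polynomial ℝ | p.natDegree ≤ n} ∧
    ∀ f : ℝ → ℝ, ContinuousOn f (Set.Icc 0 1) →
      ∃! p : Polynomial ℝ, p.natDegree ≤ n ∧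
        ∀ k ≤ n, Ffun n k ρ (fun x => p.eval x) = Ffun n k ρ f := by
  have hinj : ∀ p₁ ∈ {p : Polynomial ℝ | p.natDegree ≤ n},
      ∀ p₂ ∈ {p : Polynomial ℝ | p.natDegree ≤ n},
      (∀ k ≤ n, Ffun n k ρ (fun x => p₁.eval x) = Ffun n k ρ (fun x => p₂.eval x)) →
      p₁ = p₂ := by
    intro p₁ hp₁ p₂ hp₂ hF
    have h0 : ∀ k ≤ n, Ffun n k ρ (fun x => (p₁ - p₂).eval x) = 0 := by
      intro k hk
      rw [Ffun_poly_sub hn hρ hk hp₁ hp₂, hF k hk, sub_self]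
    have := F_vanish hn hρ
      (le_trans (Polynomial.natDegree_sub_le _ _) (max_le hp₁ hp₂)) h0
    exact sub_eq_zero.mp this
  have hsurj : ∀ q ∈ {p : Polynomial ℝ | p.natDegree ≤ n},
      ∃ p : Polynomial ℝ, p.natDegree ≤ n ∧ Upoly n ρ (fun x => p.eval x) = q := by
    intro q hq
    obtain ⟨P, hP⟩ := Ulin_surjective n ρ hn hρ ⟨q, mem_degreeLT_iff.mpr hq⟩
    refine ⟨(P : Polynomial ℝ), mem_degreeLT_iff.mp P.2, ?_⟩
    have := congrArg Subtype.val hP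
    simpa [Ulin] using this
  constructor
  · refine ⟨fun p _ => Upoly_natDegree_le n ρ _, fun p₁ hp₁ p₂ hp₂ h => ?_, fun q hq => ?_⟩
    · exact hinj p₁ hp₁ p₂ hp₂ (Ffun_poly_eq_of_Upoly_eq h)
    · obtain ⟨p, hp, hpq⟩ := hsurj q hq
      exact ⟨p, hp, hpq⟩
  · intro f _
    obtain ⟨p, hp, hpq⟩ := hsurj (Upoly n ρ f) (Upoly_natDegree_le n ρ f)
    have hFp : ∀ k ≤ n, Ffun n k ρ (fun x => p.eval x) = Ffun n k ρ f :=
      Ffun_poly_eq_of_Upoly_eq hpq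
    refine ⟨p, ⟨hp, hFp⟩, ?_⟩
    intro p' ⟨hp', hFp'⟩
    exact hinj p' hp' p hp fun k hk => by rw [hFp' k hk, hFp k hk]
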